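/- arXiv:0907.4958 — 3 statements merged into one kernel-verified Lean document; each statement's English description precedes it below -/
import Mathlib

section
/- Let A be a vector space over a field of characteristic zero equipped with a bilinear product (a,b) ↦ ab satisfying the right pre-Lie identity (ab)c − a(bc) = (ac)b − a(cb) for all a,b,c. Then, with [a,b] = ab − ba and a·b = ab + ba, the identity (a₁·a₂)·a₃ − a₁·(a₂·a₃) − a₁·[a₂,a₃] − [a₁,a₂]·a₃ − 2[a₁,a₃]·a₂ + [a₁, a₂·a₃] + [a₁·a₂, a₃] + [[a₁,a₃],a₂] = 0 holds for all a₁,a₂,a₃ in A (second defining relation of Lemma 'PreLieSym'). -/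
/-- In a right pre-Lie algebra over a field of characteristic zero, with
`[a,b] = ab - ba` and `a·b = ab + ba`, the second defining relation of Lemma
`PreLieSym` holds. -/
theorem preLie_sym_second_relation
    (k : Type*) [Field k] [CharZero k]
    (A : Type*) [AddCommGroup A] [Module k A]
    (mul : A →ₗ[k] A →ₗ[k] A)
    (prelie : ∀ a b c : A,
      mul (mul a b) c - mul a (mul b c) = mul (mul a c) b - mul a (mul c b))
    (br sdot : A → A → A)
    (hbr : ∀ a b : A, br a b = mul a b - mul b a)
    (hsdot : ∀ a b : A, sdot a b = mul a b + mul b a) :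
    ∀ a₁ a₂ a₃ : A,
      sdot (sdot a₁ a₂) a₃ - sdot a₁ (sdot a₂ a₃) - sdot a₁ (br a₂ a₃)
        - sdot (br a₁ a₂) a₃ - (2 : k) • sdot (br a₁ a₃) a₂
        + br a₁ (sdot a₂ a₃) + br (sdot a₁ a₂) a₃ + br (br a₁ a₃) a₂ = 0 := by
  intro a b c
  simp only [hbr, hsdot, map_add, map_sub, LinearMap.add_apply, LinearMap.sub_apply,
    two_smul, smul_add, smul_sub]
  linear_combination (norm := module) prelie a b c + (3:k) • prelie b a c + prelie c a b
end

section
/- Let A be a vector space over a field of characteristic zero equipped with a bilinear product (a,b) ↦ ab satisfying the right pre-Lie identity (ab)c − a(bc) = (ac)b − a(cb) for all a,b,c. Then, with [a,b] = ab − ba and a·b = ab + ba, the identity (a₁·a₃)·a₂ − a₁·(a₂·a₃) + a₁·[a₂,a₃] − [a₁,a₃]·a₂ − 2[a₁,a₂]·a₃ + [a₁, a₂·a₃] + [a₁·a₃, a₂] + [[a₁,a₂],a₃] = 0 holds for all a₁,a₂,a₃ in A (third defining relation of Lemma 'PreLieSym'). -/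
/-- In a right pre-Lie algebra over a field of characteristic zero, with
`[a,b] = ab - ba` and `a·b = ab + ba`, the third defining relation of Lemma
`PreLieSym` holds. -/
theorem preLie_sym_third_relation
    (k : Type*) [Field k] [CharZero k]
    (A : Type*) [AddCommGroup A] [Module k A]
    (mul : A →ₗ[k] A →ₗ[k] A)
    (prelie : ∀ a b c : A,
      mul (mul a b) c - mul a (mul b c) = mul (mul a c) b - mul a (mul c b))
    (br sdot : A → A → A)
    (hbr : ∀ a b : A, br a b = mul a b - mul b a)
    (hsdot : ∀ a b : A, sdot a b = mul a b + mul b a) :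
    ∀ a₁ a₂ a₃ : A,
      sdot (sdot a₁ a₃) a₂ - sdot a₁ (sdot a₂ a₃) + sdot a₁ (br a₂ a₃)
        - sdot (br a₁ a₃) a₂ - (2 : k) • sdot (br a₁ a₂) a₃
        + br a₁ (sdot a₂ a₃) + br (sdot a₁ a₃) a₂ + br (br a₁ a₂) a₃ = 0 := by
  intro a₁ a₂ a₃
  have h1 := prelie a₁ a₂ a₃
  have h2 := prelie a₂ a₁ a₃
  have h3 := prelie a₃ a₁ a₂
  simp only [hbr, hsdot, map_sub, map_add, LinearMap.sub_apply, LinearMap.add_apply,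
    two_smul]
  linear_combination (norm := abel) -h1 + h2 + h3 + h3 + h3
end

section
/- Let A be a vector space over a field k of characteristic zero equipped with a bilinear symmetric operation (a,b) ↦ a·b and a bilinear skew-symmetric operation (a,b) ↦ [a,b] satisfying the three relations of Lemma 'PreLieSym': (i) [[a₁,a₂],a₃] − [[a₁,a₃],a₂] − [a₁,[a₂,a₃]] = 0; (ii) (a₁·a₂)·a₃ − a₁·(a₂·a₃) − a₁·[a₂,a₃] − [a₁,a₂]·a₃ − 2[a₁,a₃]·a₂ + [a₁, a₂·a₃] + [a₁·a₂, a₃] + [[a₁,a₃],a₂] = 0; (iii) (a₁·a₃)·a₂ − a₁·(a₂·a₃) + a₁·[a₂,a₃] − [a₁,a₃]·a₂ − 2[a₁,a₂]·a₃ + [a₁, a₂·a₃] + [a₁·a₃, a₂] + [[a₁,a₂],a₃] = 0 for all a₁,a₂,a₃. Then the product ab := ½(a·b + [a,b]) satisfies the right pre-Lie identity (ab)c − a(bc) = (ac)b − a(cb) for all a,b,c in A. -/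
/-- Given a symmetric bilinear operation `·` and a skew-symmetric bilinear
operation `[·,·]` satisfying the three relations of Lemma `PreLieSym`, the product
`ab := ½(a·b + [a,b])` satisfies the right pre-Lie identity. -/
theorem preLie_sym_relations_imply_preLie
    (k : Type*) [Field k] [CharZero k]
    (A : Type*) [AddCommGroup A] [Module k A]
    (sdot br : A →ₗ[k] A →ₗ[k] A)
    (hsym : ∀ a b : A, sdot a b = sdot b a)
    (hskew : ∀ a b : A, br a b = - br b a)
    (rel1 : ∀ a₁ a₂ a₃ : A,
      br (br a₁ a₂) a₃ - br (br a₁ a₃) a₂ - br a₁ (br a₂ a₃) = 0)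
    (rel2 : ∀ a₁ a₂ a₃ : A,
      sdot (sdot a₁ a₂) a₃ - sdot a₁ (sdot a₂ a₃) - sdot a₁ (br a₂ a₃)
        - sdot (br a₁ a₂) a₃ - (2 : k) • sdot (br a₁ a₃) a₂
        + br a₁ (sdot a₂ a₃) + br (sdot a₁ a₂) a₃ + br (br a₁ a₃) a₂ = 0)
    (rel3 : ∀ a₁ a₂ a₃ : A,
      sdot (sdot a₁ a₃) a₂ - sdot a₁ (sdot a₂ a₃) + sdot a₁ (br a₂ a₃)
        - sdot (br a₁ a₃) a₂ - (2 : k) • sdot (br a₁ a₂) a₃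
        + br a₁ (sdot a₂ a₃) + br (sdot a₁ a₃) a₂ + br (br a₁ a₂) a₃ = 0)
    (mul : A → A → A)
    (hmul : ∀ a b : A, mul a b = (2 : k)⁻¹ • (sdot a b + br a b)) :
    ∀ a b c : A,
      mul (mul a b) c - mul a (mul b c) = mul (mul a c) b - mul a (mul c b) := by
  intro a b c
  have e1 : sdot c b = sdot b c := (hsym b c).symm
  have e2 : br c b = - br b c := hskew c b
  simp only [hmul, map_add, map_smul, LinearMap.add_apply, LinearMap.smul_apply, e1, e2,
    map_neg, LinearMap.neg_apply, smul_add, smul_neg, smul_smul]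
  linear_combination (norm := module) ((2:k)⁻¹*(2:k)⁻¹) • (rel2 a b c)
    - ((2:k)⁻¹*(2:k)⁻¹) • (rel3 a b c) + ((2:k)⁻¹*(2:k)⁻¹*2) • (rel1 a b c)
end
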